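/- Fix integers N ≥ 1 and T ≥ 1, positive constants τ, N₀ > 0, positive channel gains h_t^(i) > 0, and positive energy budgets E_i > 0. Measure throughput in nats: J(e) = Σ_{t=1}^T log(1 + (1/(τ·N₀))·Σ_{i=1}^N h_t^(i)·e_t^(i)). Suppose the allocations e^(1), …, e^(N) ∈ ℝ^T are constructed sequentially: for each i = 1,…,N, e^(i) maximizes the function x ↦ Σ_{t=1}^T log(1 + (h_t^(i)·x_t + Σ_{n<i} h_t^(n)·e_t^(n))/(τ·N₀)) over {x ∈ ℝ^T : x_t ≥ 0, Σ_{t=1}^T x_t = E_i}. Then the resulting allocation e = (e^(1),…,e^(N)) satisfies sup_{e' ∈ F} J(e') − J(e) ≤ (N−1)·T/2, where F = {e' ∈ ℝ^{N×T} : e'_t^(i) ≥ 0, Σ_{t=1}^T e'_t^(i) = E_i for every i}. -/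

import Mathlib

open Finset

private lemma log_sub_log_le' {a b : ℝ} (hb : 0 < b) (hab : b ≤ a) :
    Real.log a - Real.log b ≤ (a - b) / b := by
  have ha : 0 < a := lt_of_lt_of_le hb hab
  have h := Real.log_le_sub_one_of_pos (show (0:ℝ) < a / b by positivity)
  rw [Real.log_div ha.ne' hb.ne'] at h
  have h2 : a / b - 1 = (a - b) / b := by field_simp
  linarith [h2 ▸ h]

private lemma log_sub_log_ge' {a b : ℝ} (hb : 0 < b) (hab : b ≤ a) :
    (a - b) / a ≤ Real.log a - Real.log b := by
  have ha : 0 < a := lt_of_lt_of_le hb hab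
  have h := Real.log_le_sub_one_of_pos (show (0:ℝ) < b / a by positivity)
  rw [Real.log_div hb.ne' ha.ne'] at h
  have h2 : b / a - 1 = -((a - b) / a) := by field_simp; ring
  linarith [h2 ▸ h]

private lemma log_pair_le {a b a' b' : ℝ} (ha : 0 < a) (hb : 0 < b) (ha' : 0 < a')
    (hb' : 0 < b') (hmul : a * b' ≤ a' * b) :
    Real.log a - Real.log b ≤ Real.log a' - Real.log b' := by
  have := Real.log_le_log (by positivity) hmul
  rw [Real.log_mul ha.ne' hb'.ne', Real.log_mul ha'.ne' hb.ne'] at this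
  linarith

set_option maxHeartbeats 1000000 in
private lemma step_lemma {T : ℕ} (hT : 1 ≤ T) (c : ℝ) (hc : 0 < c)
    (d R hh e e' : Fin T → ℝ)
    (hd : ∀ t, c ≤ d t) (hR : ∀ t, 0 ≤ R t) (hhh : ∀ t, 0 < hh t)
    (he : ∀ t, 0 ≤ e t) (he' : ∀ t, 0 ≤ e' t)
    (hsum : ∑ t, e' t = ∑ t, e t)
    (hopt : ∀ x : Fin T → ℝ, (∀ t, 0 ≤ x t) → (∑ t, x t = ∑ t, e t) →
      ∑ t, Real.log (d t + hh t * x t) ≤ ∑ t, Real.log (d t + hh t * e t)) :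
    ∑ t, (Real.log (d t + R t + hh t * e' t) - Real.log (d t + R t + hh t * e t))
      ≤ (T : ℝ) / 2 := by
  have hdpos : ∀ t, 0 < d t := fun t => lt_of_lt_of_le hc (hd t)
  -- exchange argument
  have exch : ∀ s u : Fin T, 0 < e s →
      hh u * (d s + hh s * e s) ≤ hh s * (d u + hh u * e u) := by
    intro s u hes
    by_contra hlt
    push_neg at hlt
    have hsu : s ≠ u := by
      rintro rfl; exact lt_irrefl _ hlt
    obtain ⟨A, hA'⟩ : ∃ A, A = d s + hh s * e s := ⟨_, rfl⟩
    obtain ⟨B, hB'⟩ : ∃ B, B = d u + hh u * e u := ⟨_, rfl⟩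
    have hA : 0 < A := by rw [hA']; nlinarith [mul_nonneg (hhh s).le (he s), hdpos s]
    have hB : 0 < B := by rw [hB']; nlinarith [mul_nonneg (hhh u).le (he u), hdpos u]
    have hG : 0 < hh u * A - hh s * B := by rw [hA', hB']; linarith
    obtain ⟨ε, hε, hε1, hε2⟩ : ∃ ε : ℝ, 0 < ε ∧ ε ≤ e s / 2 ∧
        ε * (4 * hh s * hh u) ≤ hh u * A - hh s * B := by
      refine ⟨min (e s / 2) ((hh u * A - hh s * B) / (4 * hh s * hh u)), ?_, min_le_left _ _, ?_⟩
      · have h4 : (0:ℝ) < 4 * hh s * hh u := mul_pos (mul_pos (by norm_num) (hhh s)) (hhh u)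
        exact lt_min (by linarith) (div_pos hG h4)
      · have h4 : (0:ℝ) < 4 * hh s * hh u := mul_pos (mul_pos (by norm_num) (hhh s)) (hhh u)
        have hm := min_le_right (e s / 2) ((hh u * A - hh s * B) / (4 * hh s * hh u))
        calc min (e s / 2) ((hh u * A - hh s * B) / (4 * hh s * hh u)) * (4 * hh s * hh u)
            ≤ ((hh u * A - hh s * B) / (4 * hh s * hh u)) * (4 * hh s * hh u) :=
              mul_le_mul_of_nonneg_right hm h4.le
          _ = hh u * A - hh s * B := div_mul_cancel₀ _ h4.ne'
    obtain ⟨x, hxs, hxu, hxo⟩ : ∃ x : Fin T → ℝ, x s = e s - ε ∧ x u = e u + ε ∧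
        ∀ t, t ≠ s → t ≠ u → x t = e t := by
      refine ⟨fun t => e t + (if t = u then ε else 0) - (if t = s then ε else 0), ?_, ?_, ?_⟩
      · dsimp only; rw [if_neg hsu, if_pos rfl]; ring
      · dsimp only; rw [if_pos rfl, if_neg (Ne.symm hsu)]; ring
      · intro t hts htu
        dsimp only; rw [if_neg htu, if_neg hts]; ring
    have hx0 : ∀ t, 0 ≤ x t := by
      intro t
      by_cases hts : t = s
      · subst hts; rw [hxs]; linarith
      · by_cases htu : t = u
        · subst htu; rw [hxu]; have := he t; linarith
        · rw [hxo t hts htu]; exact he t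
    have hxsum : ∑ t, x t = ∑ t, e t := by
      have hsub : ∀ t ∈ (univ : Finset (Fin T)), t ∉ ({s, u} : Finset (Fin T)) →
          x t - e t = 0 := by
        intro t _ ht
        simp only [Finset.mem_insert, Finset.mem_singleton, not_or] at ht
        rw [hxo t ht.1 ht.2]; ring
      have h1 : ∑ t, (x t - e t) = ∑ t ∈ ({s, u} : Finset (Fin T)), (x t - e t) :=
        (Finset.sum_subset (Finset.subset_univ _) hsub).symm
      rw [Finset.sum_pair hsu, hxs, hxu] at h1
      have h2 : ∑ t, (x t - e t) = ∑ t, x t - ∑ t, e t := Finset.sum_sub_distrib _ _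
      rw [h2] at h1
      linarith
    have hcontra := hopt x hx0 hxsum
    have hFsum : ∑ t, (Real.log (d t + hh t * x t) - Real.log (d t + hh t * e t)) =
        (Real.log (d s + hh s * x s) - Real.log (d s + hh s * e s)) +
        (Real.log (d u + hh u * x u) - Real.log (d u + hh u * e u)) := by
      rw [← Finset.sum_pair (f := fun t => Real.log (d t + hh t * x t) -
        Real.log (d t + hh t * e t)) hsu]
      apply (Finset.sum_subset (Finset.subset_univ _) _).symm
      intro t _ ht
      simp only [Finset.mem_insert, Finset.mem_singleton, not_or] at ht
      rw [hxo t ht.1 ht.2]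
      ring
    have hAε : 0 < A - hh s * ε := by
      have h1 : hh s * ε ≤ hh s * (e s / 2) := mul_le_mul_of_nonneg_left hε1 (hhh s).le
      rw [hA']
      nlinarith [hdpos s, mul_pos (hhh s) hes]
    have hFs : -(hh s * ε / (A - hh s * ε)) ≤
        Real.log (d s + hh s * x s) - Real.log (d s + hh s * e s) := by
      rw [hxs]
      have h1 : d s + hh s * (e s - ε) = A - hh s * ε := by rw [hA']; ring
      have h1' : d s + hh s * e s = A := hA'.symm
      rw [h1, h1']
      have h3 := log_sub_log_le' hAε (show A - hh s * ε ≤ A by nlinarith [mul_pos (hhh s) hε])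
      have h2 : (A - (A - hh s * ε)) / (A - hh s * ε) = hh s * ε / (A - hh s * ε) := by ring_nf
      rw [h2] at h3
      linarith
    have hBε : 0 < B + hh u * ε := by nlinarith [mul_pos (hhh u) hε]
    have hFu : hh u * ε / (B + hh u * ε) ≤
        Real.log (d u + hh u * x u) - Real.log (d u + hh u * e u) := by
      rw [hxu]
      have h1 : d u + hh u * (e u + ε) = B + hh u * ε := by rw [hB']; ring
      have h1' : d u + hh u * e u = B := hB'.symm
      rw [h1, h1']
      have h3 := log_sub_log_ge' hB (show B ≤ B + hh u * ε by nlinarith [mul_pos (hhh u) hε])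
      have h2 : (B + hh u * ε - B) / (B + hh u * ε) = hh u * ε / (B + hh u * ε) := by ring_nf
      rw [h2] at h3
      linarith
    have hkey : hh s * ε / (A - hh s * ε) < hh u * ε / (B + hh u * ε) := by
      rw [div_lt_div_iff₀ hAε hBε]
      nlinarith [mul_pos hε hG, mul_le_mul_of_nonneg_left hε2 hε.le]
    have hsum2 : ∑ t, Real.log (d t + hh t * e t) < ∑ t, Real.log (d t + hh t * x t) := by
      have h4 := hFsum
      rw [Finset.sum_sub_distrib] at h4
      linarith
    linarith
  -- water level
  have hne : (univ : Finset (Fin T)).Nonempty := ⟨⟨0, hT⟩, mem_univ _⟩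
  set w := univ.inf' hne (fun t => (d t + hh t * e t) / hh t) with hw'
  have hwle : ∀ t, w ≤ (d t + hh t * e t) / hh t := fun t => Finset.inf'_le _ (mem_univ t)
  have hwpos : 0 < w := by
    rw [hw', Finset.lt_inf'_iff]
    intro t _
    exact div_pos (by nlinarith [mul_nonneg (hhh t).le (he t), hdpos t]) (hhh t)
  have hhw : ∀ t, hh t * w ≤ d t + hh t * e t := by
    intro t
    have h1 := hwle t
    rw [le_div_iff₀ (hhh t)] at h1
    linarith [h1]
  have hew : ∀ t, e t ≤ w := by
    intro t
    rw [hw']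
    apply Finset.le_inf'
    intro u _
    rcases eq_or_lt_of_le (he t) with h0 | h0
    · rw [← h0]
      exact (div_pos (by nlinarith [mul_nonneg (hhh u).le (he u), hdpos u]) (hhh u)).le
    · have hx := exch t u h0
      rw [le_div_iff₀ (hhh u)]
      have h1 : hh t * (e t * hh u) ≤ hh t * (d u + hh u * e u) := by
        nlinarith [hdpos t, (hhh u).le]
      exact le_of_mul_le_mul_left h1 (hhh t)
  -- per-slot bound
  have hslot : ∀ t, Real.log (d t + R t + hh t * e' t) - Real.log (d t + R t + hh t * e t)
      ≤ (if e t < e' t then Real.log 2 - 1/2 + (e' t - e t)/(2*w) else 0) := by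
    intro t
    have hb1 : 0 < d t + R t + hh t * e t := by
      nlinarith [hdpos t, hR t, mul_nonneg (hhh t).le (he t)]
    have ha1 : 0 < d t + R t + hh t * e' t := by
      nlinarith [hdpos t, hR t, mul_nonneg (hhh t).le (he' t)]
    by_cases hlt : e t < e' t
    · rw [if_pos hlt]
      have ha2 : 0 < d t + hh t * e' t := by nlinarith [hdpos t, mul_nonneg (hhh t).le (he' t)]
      have hb2 : 0 < d t + hh t * e t := by nlinarith [hdpos t, mul_nonneg (hhh t).le (he t)]
      have step1 : Real.log (d t + R t + hh t * e' t) - Real.log (d t + R t + hh t * e t)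
          ≤ Real.log (d t + hh t * e' t) - Real.log (d t + hh t * e t) := by
        apply log_pair_le ha1 hb1 ha2 hb2
        nlinarith [mul_nonneg (hR t) (mul_nonneg (hhh t).le (sub_nonneg.mpr hlt.le))]
      have step2 : Real.log (d t + hh t * e' t) - Real.log (d t + hh t * e t)
          ≤ Real.log (w + (e' t - e t)) - Real.log w := by
        apply log_pair_le ha2 hb2 (by linarith [hwpos]) hwpos
        nlinarith [mul_nonneg (sub_nonneg.mpr hlt.le) (sub_nonneg.mpr (hhw t)),
          mul_nonneg (mul_nonneg (hhh t).le (he t)) (sub_nonneg.mpr hlt.le)]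
      have step3 : Real.log (w + (e' t - e t)) - Real.log w
          ≤ Real.log 2 - 1/2 + (e' t - e t)/(2*w) := by
        have hx : (0:ℝ) < (w + (e' t - e t)) / (2 * w) := by
          apply div_pos (by linarith) (by linarith)
        have h := Real.log_le_sub_one_of_pos hx
        rw [Real.log_div (by linarith) (by positivity),
          Real.log_mul (by norm_num) hwpos.ne'] at h
        have h2 : (w + (e' t - e t)) / (2 * w) - 1 = (e' t - e t)/(2*w) - 1/2 := by
          field_simp; ring
        rw [h2] at h
        linarith
      linarith
    · rw [if_neg hlt]
      push_neg at hlt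
      have h1 : d t + R t + hh t * e' t ≤ d t + R t + hh t * e t := by
        nlinarith [(hhh t).le]
      have := Real.log_le_log ha1 h1
      linarith
  -- sum up
  have hsum1 : ∑ t, (Real.log (d t + R t + hh t * e' t) - Real.log (d t + R t + hh t * e t))
      ≤ ∑ t ∈ univ.filter (fun t => e t < e' t), (Real.log 2 - 1/2 + (e' t - e t)/(2*w)) := by
    rw [Finset.sum_filter]
    exact Finset.sum_le_sum (fun t _ => hslot t)
  set P := univ.filter (fun t => e t < e' t) with hP'
  set Q := univ.filter (fun t => ¬ e t < e' t) with hQ'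
  have hPc : ∑ t ∈ P, (e' t - e t) = ∑ t ∈ Q, (e t - e' t) := by
    have h0 : ∑ t, (e' t - e t) = 0 := by rw [Finset.sum_sub_distrib, hsum]; ring
    have hsp := Finset.sum_filter_add_sum_filter_not univ (fun t => e t < e' t)
      (fun t => e' t - e t)
    rw [h0] at hsp
    have h1 : ∑ t ∈ Q, (e t - e' t) = - ∑ t ∈ Q, (e' t - e t) := by
      rw [← Finset.sum_neg_distrib]
      exact Finset.sum_congr rfl (fun t _ => by ring)
    rw [h1, ← hP', ← hQ'] at *
    linarith [hsp]
  have hQb : ∑ t ∈ Q, (e t - e' t) ≤ (Q.card : ℝ) * w := by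
    calc ∑ t ∈ Q, (e t - e' t) ≤ ∑ _t ∈ Q, w := by
          apply Finset.sum_le_sum
          intro t _
          have := he' t; have := hew t; linarith
      _ = (Q.card : ℝ) * w := by rw [Finset.sum_const, nsmul_eq_mul]
  have hcard : P.card + Q.card = T := by
    rw [hP', hQ', Finset.card_filter_add_card_filter_not, Finset.card_univ,
      Fintype.card_fin]
  have hsplit : ∑ t ∈ P, (Real.log 2 - 1/2 + (e' t - e t)/(2*w))
      = (P.card : ℝ) * (Real.log 2 - 1/2) + (∑ t ∈ P, (e' t - e t))/(2*w) := by
    rw [Finset.sum_add_distrib, Finset.sum_const, nsmul_eq_mul, ← Finset.sum_div]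
  have hlog2 : Real.log 2 ≤ 1 := by
    have := Real.log_le_sub_one_of_pos (show (0:ℝ) < 2 by norm_num); linarith
  have hdiv : (∑ t ∈ P, (e' t - e t))/(2*w) ≤ ((Q.card : ℝ) * w)/(2*w) := by
    apply div_le_div_of_nonneg_right ?_ (by linarith)
    · rw [hPc]; exact hQb
  have hcast : (P.card : ℝ) + (Q.card : ℝ) = (T : ℝ) := by exact_mod_cast hcard
  have hqw : ((Q.card : ℝ) * w)/(2*w) = (Q.card : ℝ)/2 := by
    field_simp
  have hmul : (P.card : ℝ) * (Real.log 2 - 1/2) ≤ (P.card : ℝ) * (1/2) :=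
    mul_le_mul_of_nonneg_left (by linarith) (Nat.cast_nonneg _)
  rw [hsplit] at hsum1
  have h9 : (∑ t ∈ P, (e' t - e t))/(2*w) ≤ (Q.card : ℝ)/2 := by rw [← hqw]; exact hdiv
  linarith [hsum1, hmul, h9, hcast]

/-- Quantitative part of Theorem 2: after one pass of sequential water-filling
best responses (each user maximizing against the already-updated users'
signals treated as noise), the sum-throughput in nats is within
`(N-1)·T/2` of the offline optimum. -/
theorem stmt_10
    (N T : ℕ) (hN : 1 ≤ N) (hT : 1 ≤ T)
    (τ N₀ : ℝ) (hτ : 0 < τ) (hN₀ : 0 < N₀)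
    (h : Fin N → Fin T → ℝ) (hh : ∀ i t, 0 < h i t)
    (E : Fin N → ℝ) (hE : ∀ i, 0 < E i)
    (e : Fin N → Fin T → ℝ)
    (hbr : ∀ i : Fin N,
      ((∀ t, 0 ≤ e i t) ∧ ∑ t, e i t = E i) ∧
      ∀ x : Fin T → ℝ, (∀ t, 0 ≤ x t) → (∑ t, x t = E i) →
        ∑ t, Real.log (1 +
            (h i t * x t + ∑ n ∈ univ.filter (fun n => n < i), h n t * e n t) / (τ * N₀)) ≤
          ∑ t, Real.log (1 +
            (h i t * e i t + ∑ n ∈ univ.filter (fun n => n < i), h n t * e n t) / (τ * N₀))) :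
    ∀ e' : Fin N → Fin T → ℝ,
      (∀ i t, 0 ≤ e' i t) → (∀ i, ∑ t, e' i t = E i) →
      ∑ t, Real.log (1 + (1 / (τ * N₀)) * ∑ i, h i t * e' i t) -
          ∑ t, Real.log (1 + (1 / (τ * N₀)) * ∑ i, h i t * e i t) ≤
        ((N : ℝ) - 1) * (T : ℝ) / 2 := by
  intro e' he' hE'
  have hc : 0 < τ * N₀ := mul_pos hτ hN₀
  have he : ∀ i t, 0 ≤ e i t := fun i => (hbr i).1.1
  have hEe : ∀ i, ∑ t, e i t = E i := fun i => (hbr i).1.2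
  have hS' : ∀ t, 0 ≤ ∑ i, h i t * e' i t :=
    fun t => Finset.sum_nonneg fun i _ => mul_nonneg (hh i t).le (he' i t)
  have hS : ∀ t, 0 ≤ ∑ i, h i t * e i t :=
    fun t => Finset.sum_nonneg fun i _ => mul_nonneg (hh i t).le (he i t)
  have hlog : ∀ A : ℝ, 0 ≤ A → Real.log (1 + 1 / (τ * N₀) * A)
      = Real.log (τ * N₀ + A) - Real.log (τ * N₀) := by
    intro A hA
    rw [show 1 + 1 / (τ * N₀) * A = (τ * N₀ + A) / (τ * N₀) by field_simp,
      Real.log_div (by positivity) (by positivity)]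
  set V : ℕ → ℝ := fun k => ∑ t, Real.log ((τ * N₀) +
      ((∑ n ∈ univ.filter (fun n : Fin N => (n : ℕ) < k), h n t * e n t) +
       (∑ n ∈ univ.filter (fun n : Fin N => k ≤ (n : ℕ)), h n t * e' n t))) with hV
  have hV0' : V 0 = ∑ t, Real.log (τ * N₀ + ∑ i, h i t * e' i t) := by
    simp only [hV]
    apply Finset.sum_congr rfl
    intro t _
    have hf1 : univ.filter (fun n : Fin N => (n : ℕ) < 0) = ∅ := by
      apply Finset.filter_false_of_mem; intro n _; omega
    have hf2 : univ.filter (fun n : Fin N => 0 ≤ (n : ℕ)) = univ := by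
      apply Finset.filter_true_of_mem; intro n _; omega
    rw [hf1, hf2, Finset.sum_empty]
    norm_num
  have hVN' : V N = ∑ t, Real.log (τ * N₀ + ∑ i, h i t * e i t) := by
    simp only [hV]
    apply Finset.sum_congr rfl
    intro t _
    have hf1 : univ.filter (fun n : Fin N => (n : ℕ) < N) = univ := by
      apply Finset.filter_true_of_mem; intro n _; exact n.isLt
    have hf2 : univ.filter (fun n : Fin N => N ≤ (n : ℕ)) = ∅ := by
      apply Finset.filter_false_of_mem; intro n _; have := n.isLt; omega
    rw [hf1, hf2, Finset.sum_empty]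
    norm_num
  have hgap : ∑ t, Real.log (1 + 1 / (τ * N₀) * ∑ i, h i t * e' i t) -
      ∑ t, Real.log (1 + 1 / (τ * N₀) * ∑ i, h i t * e i t) = V 0 - V N := by
    rw [Finset.sum_congr rfl (fun t _ => hlog _ (hS' t)),
      Finset.sum_congr rfl (fun t _ => hlog _ (hS t)),
      Finset.sum_sub_distrib, Finset.sum_sub_distrib, hV0', hVN']
    ring
  have hstep : ∀ k, k < N → V k - V (k + 1) ≤ (if k + 1 = N then (0:ℝ) else (T:ℝ)/2) := by
    intro k hk
    set i : Fin N := ⟨k, hk⟩ with hi'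
    have hival : (i : ℕ) = k := rfl
    set dd : Fin T → ℝ := fun t => τ * N₀ +
      ∑ n ∈ univ.filter (fun n : Fin N => (n : ℕ) < k), h n t * e n t with hdd
    set RR : Fin T → ℝ := fun t =>
      ∑ n ∈ univ.filter (fun n : Fin N => k + 1 ≤ (n : ℕ)), h n t * e' n t with hRR
    have hnotmem1 : i ∉ univ.filter (fun n : Fin N => k + 1 ≤ (n : ℕ)) := by
      simp [hival]
    have hnotmem2 : i ∉ univ.filter (fun n : Fin N => (n : ℕ) < k) := by
      simp [hival]
    have hins1 : (univ.filter (fun n : Fin N => k ≤ (n : ℕ)))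
        = insert i (univ.filter (fun n : Fin N => k + 1 ≤ (n : ℕ))) := by
      ext n
      simp only [Finset.mem_filter, Finset.mem_univ, true_and, Finset.mem_insert,
        Fin.ext_iff, hival]
      omega
    have hins2 : (univ.filter (fun n : Fin N => (n : ℕ) < k + 1))
        = insert i (univ.filter (fun n : Fin N => (n : ℕ) < k)) := by
      ext n
      simp only [Finset.mem_filter, Finset.mem_univ, true_and, Finset.mem_insert,
        Fin.ext_iff, hival]
      omega
    have hVk : V k = ∑ t, Real.log (dd t + RR t + h i t * e' i t) := by
      simp only [hV, hdd, hRR]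
      apply Finset.sum_congr rfl
      intro t _
      rw [hins1, Finset.sum_insert hnotmem1]
      congr 1
      ring
    have hVk1 : V (k + 1) = ∑ t, Real.log (dd t + RR t + h i t * e i t) := by
      simp only [hV, hdd, hRR]
      apply Finset.sum_congr rfl
      intro t _
      rw [hins2, Finset.sum_insert hnotmem2]
      congr 1
      ring
    have hdle : ∀ t, τ * N₀ ≤ dd t := by
      intro t
      simp only [hdd]
      have : 0 ≤ ∑ n ∈ univ.filter (fun n : Fin N => (n : ℕ) < k), h n t * e n t :=
        Finset.sum_nonneg fun n _ => mul_nonneg (hh n t).le (he n t)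
      linarith
    have hRle : ∀ t, 0 ≤ RR t := by
      intro t
      simp only [hRR]
      exact Finset.sum_nonneg fun n _ => mul_nonneg (hh n t).le (he' n t)
    have hopt : ∀ x : Fin T → ℝ, (∀ t, 0 ≤ x t) → (∑ t, x t = ∑ t, e i t) →
        ∑ t, Real.log (dd t + h i t * x t) ≤ ∑ t, Real.log (dd t + h i t * e i t) := by
      intro x hx hxs
      have hfeq : (univ.filter (fun n => n < i))
          = (univ.filter (fun n : Fin N => (n : ℕ) < k)) := by
        apply Finset.filter_congr
        intro n _
        simp [Fin.lt_def, hival]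
      have hbri := (hbr i).2 x hx (by rw [hxs, hEe i])
      rw [hfeq] at hbri
      have hconv : ∀ (y : Fin T → ℝ), (∀ t, 0 ≤ y t) → ∀ t : Fin T,
          Real.log (1 + (h i t * y t +
            ∑ n ∈ univ.filter (fun n : Fin N => (n : ℕ) < k), h n t * e n t) / (τ * N₀))
          = Real.log (dd t + h i t * y t) - Real.log (τ * N₀) := by
        intro y hy t
        have hI : 0 ≤ ∑ n ∈ univ.filter (fun n : Fin N => (n : ℕ) < k), h n t * e n t :=
          Finset.sum_nonneg fun n _ => mul_nonneg (hh n t).le (he n t)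
        have hpos : 0 < dd t + h i t * y t := by
          have h1 := hdle t
          have h2 : 0 ≤ h i t * y t := mul_nonneg (hh i t).le (hy t)
          linarith
        rw [show 1 + (h i t * y t +
            ∑ n ∈ univ.filter (fun n : Fin N => (n : ℕ) < k), h n t * e n t) / (τ * N₀)
            = (dd t + h i t * y t) / (τ * N₀) by
          simp only [hdd]; field_simp; ring,
          Real.log_div hpos.ne' hc.ne']
      rw [Finset.sum_congr rfl (fun t _ => hconv x hx t),
        Finset.sum_congr rfl (fun t _ => hconv (e i) (he i) t),
        Finset.sum_sub_distrib, Finset.sum_sub_distrib] at hbri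
      linarith
    by_cases hlast : k + 1 = N
    · rw [if_pos hlast]
      have hRz : ∀ t, RR t = 0 := by
        intro t
        simp only [hRR]
        have hf : univ.filter (fun n : Fin N => k + 1 ≤ (n : ℕ)) = ∅ := by
          apply Finset.filter_false_of_mem
          intro n _
          have := n.isLt
          omega
        rw [hf, Finset.sum_empty]
      have h1 := hopt (e' i) (he' i) (by rw [hE' i, hEe i])
      have h2 : V k = ∑ t, Real.log (dd t + h i t * e' i t) := by
        rw [hVk]
        exact Finset.sum_congr rfl fun t _ => by rw [hRz t, add_zero]
      have h3 : V (k + 1) = ∑ t, Real.log (dd t + h i t * e i t) := by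
        rw [hVk1]
        exact Finset.sum_congr rfl fun t _ => by rw [hRz t, add_zero]
      rw [h2, h3]
      linarith
    · rw [if_neg hlast]
      have hgoal : V k - V (k + 1) = ∑ t, (Real.log (dd t + RR t + h i t * e' i t)
          - Real.log (dd t + RR t + h i t * e i t)) := by
        rw [hVk, hVk1, Finset.sum_sub_distrib]
      rw [hgoal]
      exact step_lemma hT (τ * N₀) hc dd RR (h i) (e i) (e' i) hdle hRle (hh i)
        (he i) (he' i) (by rw [hE' i, hEe i]) hopt
  rw [hgap, (Finset.sum_range_sub' V N).symm]
  calc ∑ k ∈ Finset.range N, (V k - V (k + 1))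
      ≤ ∑ k ∈ Finset.range N, (if k + 1 = N then (0:ℝ) else (T:ℝ)/2) :=
        Finset.sum_le_sum fun k hk => hstep k (Finset.mem_range.mp hk)
    _ = ((N : ℝ) - 1) * (T : ℝ) / 2 := by
        obtain ⟨M, rfl⟩ : ∃ M, N = M + 1 := ⟨N - 1, by omega⟩
        rw [Finset.sum_range_succ, if_pos rfl,
          Finset.sum_congr rfl (fun k hk => if_neg (by
            have := Finset.mem_range.mp hk; omega)),
          Finset.sum_const, Finset.card_range, nsmul_eq_mul]
        push_cast
        ring
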